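/- Let n, m, k be natural numbers with m ≤ n and 1 ≤ k ≤ 2^n, let Y be a finite type with exactly 2^m elements, and let T : GF(2^n) → Y be a balanced function, i.e. every fiber T⁻¹(y) has exactly 2^{n−m} elements. Let x₁, …, x_k be k distinct elements of GF(2^n) and y₁, …, y_k arbitrary elements of Y. If a is sampled uniformly at random from GF(2^n)^k, then the probability that T(p_a(x_i)) = y_i holds simultaneously for all i = 1, …, k equals (2^{−m})^k; equivalently, the number of tuples a ∈ GF(2^n)^k satisfying all k equations is exactly 2^{(n−m)k}. In other words, the truncated family {T ∘ p_a : a ∈ GF(2^n)^k} is strongly k-universal from GF(2^n) to Y. -/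

import Mathlib

theorem stmt_7 (n m k : ℕ) (hmn : m ≤ n) (hk : 1 ≤ k) (hk2 : k ≤ 2 ^ n)
    (Y : Type) [Fintype Y] (hY : Fintype.card Y = 2 ^ m)
    (T : GaloisField 2 n → Y)
    (hT : ∀ y : Y, Nat.card {z : GaloisField 2 n // T z = y} = 2 ^ (n - m))
    (x : Fin k → GaloisField 2 n) (hx : Function.Injective x)
    (y : Fin k → Y) :
    letI : Fintype (GaloisField 2 n) := Fintype.ofFinite _
    (PMF.uniformOfFintype (Fin k → GaloisField 2 n)).toOuterMeasure
        {a | ∀ i : Fin k, T (∑ j : Fin k, a j * x i ^ (j : ℕ)) = y i}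
      = (1 / (2 ^ m : ENNReal)) ^ k ∧
    Nat.card {a : Fin k → GaloisField 2 n //
        ∀ i : Fin k, T (∑ j : Fin k, a j * x i ^ (j : ℕ)) = y i}
      = 2 ^ ((n - m) * k) := by
  letI : Fintype (GaloisField 2 n) := Fintype.ofFinite _
  -- card of the field from the fibers
  have hcard : Nat.card (GaloisField 2 n) = 2 ^ n := by
    have h1 : Nat.card (GaloisField 2 n) = Nat.card (Σ y : Y, {z : GaloisField 2 n // T z = y}) :=
      Nat.card_congr (Equiv.sigmaFiberEquiv T).symm
    classical
    rw [h1, Nat.card_eq_fintype_card, Fintype.card_sigma]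
    simp only [← Nat.card_eq_fintype_card, hT]
    rw [Finset.sum_const, Finset.card_univ, hY, smul_eq_mul, ← pow_add,
      Nat.add_sub_cancel' hmn]
  -- the evaluation map is bijective (Vandermonde)
  let F := GaloisField 2 n
  let M : Matrix (Fin k) (Fin k) F := Matrix.vandermonde x
  have hM : IsUnit M := by
    rw [Matrix.isUnit_iff_isUnit_det]
    exact (Matrix.det_vandermonde_ne_zero_iff.mpr hx).isUnit
  have hbij : Function.Bijective M.mulVec :=
    ⟨Matrix.mulVec_injective_iff_isUnit.mpr hM, Matrix.mulVec_surjective_iff_isUnit.mpr hM⟩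
  have hEval : ∀ (a : Fin k → F) (i : Fin k),
      (∑ j : Fin k, a j * x i ^ (j : ℕ)) = M.mulVec a i := by
    intro a i
    simp [M, Matrix.mulVec, Matrix.vandermonde, dotProduct, mul_comm]
  -- the key counting equiv
  have hEquiv : {a : Fin k → F // ∀ i : Fin k, T (∑ j : Fin k, a j * x i ^ (j : ℕ)) = y i}
      ≃ ∀ i : Fin k, {z : F // T z = y i} := by
    refine (Equiv.subtypeEquiv (Equiv.ofBijective M.mulVec hbij) ?_).trans
      (Equiv.subtypePiEquivPi)
    intro a
    simp only [Equiv.ofBijective_apply]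
    exact forall_congr' fun i => by rw [hEval]
  have hcount : Nat.card {a : Fin k → F //
      ∀ i : Fin k, T (∑ j : Fin k, a j * x i ^ (j : ℕ)) = y i} = 2 ^ ((n - m) * k) := by
    rw [Nat.card_congr hEquiv, Nat.card_pi]
    simp only [F, hT]
    rw [Finset.prod_const, Finset.card_univ, Fintype.card_fin, ← pow_mul, Nat.mul_comm]
  refine ⟨?_, hcount⟩
  classical
  rw [PMF.toOuterMeasure_uniformOfFintype_apply]
  have hTot : (Fintype.card (Fin k → F) : ℕ) = 2 ^ (n * k) := by
    rw [Fintype.card_pi]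
    simp only [← Nat.card_eq_fintype_card, F, hcard]
    rw [Finset.prod_const, Finset.card_univ, Fintype.card_fin, ← pow_mul, Nat.mul_comm]
  simp only [← Nat.card_eq_fintype_card, Set.coe_setOf]
  rw [hcount, Nat.card_eq_fintype_card, hTot]
  push_cast
  rw [one_div]
  symm
  rw [ENNReal.eq_div_iff (by positivity) (ENNReal.pow_ne_top ENNReal.ofNat_ne_top),
    ← ENNReal.inv_pow, ← pow_mul,
    show n * k = (n - m) * k + m * k by rw [← Nat.add_mul, Nat.sub_add_cancel hmn],
    pow_add, mul_comm ((2:ENNReal) ^ ((n - m) * k)), mul_right_comm,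
    ENNReal.mul_inv_cancel (by positivity) (ENNReal.pow_ne_top ENNReal.ofNat_ne_top), one_mul]
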